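/- Let |q|<1, and let A_N denote the N-th numerator convergent of the continued fraction H(a,b,c,d,q), defined by the recurrences A_0 = 0, A_1 = 1, A_{N+1} = (a + b + d q^N) A_N + (-ab + c q^N) A_{N-1} for N ≥ 1. Then A_N = Σ_{j,l,n ≥ 0} a^j b^{N-1-n-j-l} c^l d^{n-l} q^{n(n+1)/2 + l(l+1)/2} · [n+j choose j]_q · [N-1-j-l choose n]_q · [n choose l]_q, where the sum is over triples with l ≤ n and l + j + n ≤ N - 1 (the Gaussian binomials vanish otherwise). -/

import Mathlib

open Finset

/-- The Gaussian binomial coefficient `[n choose m]_q` as a complex number. -/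
noncomputable def qbinom (q : ℂ) (n m : ℕ) : ℂ :=
  if m ≤ n then
    (∏ k ∈ range n, (1 - q ^ (k + 1))) /
      ((∏ k ∈ range m, (1 - q ^ (k + 1))) * ∏ k ∈ range (n - m), (1 - q ^ (k + 1)))
  else 0

/-- Explicit formula for the numerator convergents of `H(a,b,c,d,q)`:
`A_N = Σ_{j,l,n} a^j b^{N-1-n-j-l} c^l d^{n-l} q^{n(n+1)/2+l(l+1)/2}
[n+j, j]_q [N-1-j-l, n]_q [n, l]_q`, summed over `n + j + l ≤ N - 1` (and `l ≤ n`,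
enforced by the vanishing of `[n, l]_q`). -/
noncomputable def qfac (q : ℂ) (n : ℕ) : ℂ := ∏ k ∈ range n, (1 - q ^ (k + 1))

lemma qfac_ne_zero {q : ℂ} (hq : ‖q‖ < 1) (n : ℕ) : qfac q n ≠ 0 := by
  apply Finset.prod_ne_zero_iff.2
  intro k _
  have h1 : ‖q ^ (k+1)‖ < 1 := by
    calc ‖q ^ (k+1)‖ = ‖q‖ ^ (k+1) := norm_pow _ _
    _ ≤ ‖q‖ := pow_le_of_le_one (norm_nonneg q) hq.le (Nat.succ_ne_zero k)
    _ < 1 := hq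
  intro h
  have : q ^ (k+1) = 1 := by linear_combination -h
  rw [this] at h1; simp at h1

lemma qbinom_eq (q : ℂ) (n m : ℕ) :
    qbinom q n m = if m ≤ n then qfac q n / (qfac q m * qfac q (n - m)) else 0 := rfl

lemma qfac_succ (q : ℂ) (n : ℕ) : qfac q (n+1) = qfac q n * (1 - q ^ (n+1)) := by
  rw [qfac, Finset.prod_range_succ]; rfl

lemma qfac_zero (q : ℂ) : qfac q 0 = 1 := rfl

lemma qbinom_of_lt (q : ℂ) {n m : ℕ} (h : n < m) : qbinom q n m = 0 := by
  rw [qbinom_eq, if_neg (by omega)]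

lemma qbinom_zero {q : ℂ} (hq : ‖q‖ < 1) (n : ℕ) : qbinom q n 0 = 1 := by
  rw [qbinom_eq, if_pos (Nat.zero_le n), qfac_zero, Nat.sub_zero, one_mul,
    div_self (qfac_ne_zero hq n)]

lemma qbinom_self {q : ℂ} (hq : ‖q‖ < 1) (n : ℕ) : qbinom q n n = 1 := by
  rw [qbinom_eq, if_pos le_rfl, Nat.sub_self, qfac_zero, mul_one,
    div_self (qfac_ne_zero hq n)]


lemma pascal1 {q : ℂ} (hq : ‖q‖ < 1) (m k : ℕ) :
    qbinom q (m+1) (k+1) = qbinom q m k + q ^ (k+1) * qbinom q m (k+1) := by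
  rcases lt_trichotomy k m with h | rfl | h
  · obtain ⟨u, rfl⟩ : ∃ u, m = k + u + 1 := ⟨m - k - 1, by omega⟩
    rw [qbinom_eq, qbinom_eq, qbinom_eq, if_pos (by omega), if_pos (by omega),
      if_pos (by omega)]
    have e1 : k + u + 1 + 1 - (k + 1) = u + 1 := by omega
    have e2 : k + u + 1 - k = u + 1 := by omega
    have e3 : k + u + 1 - (k + 1) = u := by omega
    rw [e1, e2, e3, qfac_succ q (k + u + 1), qfac_succ q k, qfac_succ q u]
    have hk := qfac_ne_zero hq k
    have hm := qfac_ne_zero hq (k + u + 1)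
    have hu := qfac_ne_zero hq u
    have h1 : (1 : ℂ) - q ^ (k+1) ≠ 0 := by
      have := qfac_ne_zero hq (k+1); rw [qfac_succ] at this
      exact right_ne_zero_of_mul this
    have h2 : (1 : ℂ) - q ^ (u+1) ≠ 0 := by
      have := qfac_ne_zero hq (u+1); rw [qfac_succ] at this
      exact right_ne_zero_of_mul this
    have e4 : q ^ (k+1) * q ^ (u+1) = q ^ (k + u + 1 + 1) := by
      rw [← pow_add]; congr 1; omega
    field_simp
    linear_combination (qfac q k * qfac q (k+u+1) * qfac q u) * e4
  · rw [qbinom_self hq, qbinom_self hq, qbinom_of_lt q (by omega)]; ring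
  · rw [qbinom_of_lt q (by omega), qbinom_of_lt q (by omega), qbinom_of_lt q (by omega)]
    ring

lemma pascal2 {q : ℂ} (hq : ‖q‖ < 1) (m k : ℕ) :
    qbinom q (m+1) (k+1) = qbinom q m (k+1) + q ^ (m - k) * qbinom q m k := by
  rcases lt_trichotomy k m with h | rfl | h
  · obtain ⟨u, rfl⟩ : ∃ u, m = k + u + 1 := ⟨m - k - 1, by omega⟩
    rw [qbinom_eq, qbinom_eq, qbinom_eq, if_pos (by omega), if_pos (by omega),
      if_pos (by omega)]
    have e1 : k + u + 1 + 1 - (k + 1) = u + 1 := by omega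
    have e2 : k + u + 1 - k = u + 1 := by omega
    have e3 : k + u + 1 - (k + 1) = u := by omega
    have e5 : k + u + 1 - k = u + 1 := by omega
    rw [e1, e2, e3, qfac_succ q (k + u + 1), qfac_succ q k, qfac_succ q u]
    have hk := qfac_ne_zero hq k
    have hm := qfac_ne_zero hq (k + u + 1)
    have hu := qfac_ne_zero hq u
    have h1 : (1 : ℂ) - q ^ (k+1) ≠ 0 := by
      have := qfac_ne_zero hq (k+1); rw [qfac_succ] at this
      exact right_ne_zero_of_mul this
    have h2 : (1 : ℂ) - q ^ (u+1) ≠ 0 := by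
      have := qfac_ne_zero hq (u+1); rw [qfac_succ] at this
      exact right_ne_zero_of_mul this
    have e4 : q ^ (u+1) * q ^ (k+1) = q ^ (k + u + 1 + 1) := by
      rw [← pow_add]; congr 1; omega
    field_simp
    linear_combination (qfac q k * qfac q (k+u+1) * qfac q u) * e4
  · rw [qbinom_self hq, qbinom_self hq, qbinom_of_lt q (by omega), Nat.sub_self]; ring
  · rw [qbinom_of_lt q (by omega), qbinom_of_lt q (by omega), qbinom_of_lt q (by omega)]
    ring

lemma tri (k : ℕ) : (k+1)*(k+1+1)/2 = k*(k+1)/2 + (k+1) := by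
  have h1 : (k+1)*(k+1+1) = k*(k+1) + 2*(k+1) := by ring
  have h2 : 2 ∣ k*(k+1) := (Nat.even_mul_succ_self k).two_dvd
  omega

noncomputable def tt (q a b c d : ℂ) (N n j l : ℕ) : ℂ :=
  a ^ j * b ^ (N - 1 - n - j - l) * c ^ l * d ^ (n - l) *
    q ^ (n * (n + 1) / 2 + l * (l + 1) / 2) *
    qbinom q (n + j) j * qbinom q (N - 1 - j - l) n * qbinom q n l

lemma tt_eq (q a b c d : ℂ) (N n j l rb rd e m1 m2 : ℕ)
    (h1 : N - 1 - n - j - l = rb) (h2 : n - l = rd)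
    (h3 : n * (n + 1) / 2 + l * (l + 1) / 2 = e)
    (h4 : n + j = m1) (h5 : N - 1 - j - l = m2) :
    tt q a b c d N n j l
      = a ^ j * b ^ rb * c ^ l * d ^ rd * q ^ e *
        qbinom q m1 j * qbinom q m2 n * qbinom q n l := by
  subst h1 h2 h3 h4 h5; rfl

lemma tt_n0 {q : ℂ} (hq : ‖q‖ < 1) (a b c d : ℂ) (M jj rb : ℕ) (h : M - 1 - jj = rb) :
    tt q a b c d M 0 jj 0 = a ^ jj * b ^ rb := by
  subst h
  rw [tt, show (0:ℕ)+jj = jj from Nat.zero_add jj, qbinom_self hq, qbinom_zero hq, qbinom_zero hq,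
    show M - 1 - 0 - jj - 0 = M - 1 - jj from by omega]
  norm_num

lemma perpoint {q : ℂ} (hq : ‖q‖ < 1) (a b c d : ℂ) (N n j l : ℕ) (hN : 1 ≤ N)
    (h : n + j + l ≤ N) :
    tt q a b c d (N+1) n j l
      = b * tt q a b c d N n j l
        + (if j = 0 then 0 else (a * tt q a b c d N n (j-1) l
            - a * b * tt q a b c d (N-1) n (j-1) l))
        + (if n = 0 then 0 else d * q^N * tt q a b c d N (n-1) j l)
        + (if n = 0 ∨ l = 0 then 0 else c * q^N * tt q a b c d (N-1) (n-1) j (l-1)) := by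
  rcases n with _ | n'
  · -- n = 0
    rw [if_pos rfl, if_pos (Or.inl rfl)]
    rcases l with _ | l'
    · -- l = 0
      rcases j with _ | j'
      · -- j = 0
        obtain ⟨N', rfl⟩ : ∃ N', N = N' + 1 := ⟨N - 1, by omega⟩
        rw [if_pos rfl, tt_n0 hq a b c d (N'+1+1) 0 (N'+1) (by omega),
          tt_n0 hq a b c d (N'+1) 0 N' (by omega)]
        ring
      · -- j = j'+1
        rw [if_neg (Nat.succ_ne_zero j')]
        simp only [Nat.add_sub_cancel]
        obtain ⟨r, rfl⟩ : ∃ r, N = j' + 1 + r := ⟨N - (j'+1), by omega⟩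
        rcases r with _ | r'
        · rw [tt_n0 hq a b c d (j'+1+0+1) (j'+1) 0 (by omega),
            tt_n0 hq a b c d (j'+1+0) (j'+1) 0 (by omega),
            tt_n0 hq a b c d (j'+1+0) j' 0 (by omega),
            tt_n0 hq a b c d (j'+1+0-1) j' 0 (by omega)]
          ring
        · rw [tt_n0 hq a b c d (j'+1+(r'+1)+1) (j'+1) (r'+1) (by omega),
            tt_n0 hq a b c d (j'+1+(r'+1)) (j'+1) r' (by omega),
            tt_n0 hq a b c d (j'+1+(r'+1)) j' (r'+1) (by omega),
            tt_n0 hq a b c d (j'+1+(r'+1)-1) j' r' (by omega)]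
          ring
    · -- l = l'+1 : everything vanishes
      have z : ∀ M jj, tt q a b c d M 0 jj (l'+1) = 0 := by
        intro M jj
        rw [tt, qbinom_of_lt q (Nat.succ_pos l')]
        ring
      rcases j with _ | j' <;> simp [z]
  · -- n = n'+1
    rw [if_neg (Nat.succ_ne_zero n')]
    simp only [Nat.add_sub_cancel]
    rcases l with _ | l'
    · -- l = 0
      rw [if_pos (Or.inr rfl)]
      obtain ⟨r, rfl⟩ : ∃ r, N = n' + 1 + j + r := ⟨N - (n'+1+j), by omega⟩
      rcases j with _ | j' <;> rcases r with _ | r'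
      · -- j = 0, r = 0
        rw [if_pos rfl,
          tt_eq q a b c d (n'+1+0+0+1) (n'+1) 0 0 0 (n'+1)
            (n'*(n'+1)/2 + (n'+1)) (n'+1) (n'+1)
            (by omega) (by omega) (by have := tri n'; omega) (by omega) (by omega),
          tt_eq q a b c d (n'+1+0+0) (n'+1) 0 0 0 (n'+1)
            (n'*(n'+1)/2 + (n'+1)) (n'+1) n'
            (by omega) (by omega) (by have := tri n'; omega) (by omega) (by omega),
          tt_eq q a b c d (n'+1+0+0) n' 0 0 0 n'
            (n'*(n'+1)/2) n' n'
            (by omega) (by omega) (by omega) (by omega) (by omega),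
          qbinom_self hq (n'+1), qbinom_self hq n',
          qbinom_of_lt q (show n' < n'+1 from by omega),
          qbinom_zero hq (n'+1), qbinom_zero hq n']
        ring
      · -- j = 0, r = r'+1
        rw [if_pos rfl,
          tt_eq q a b c d (n'+1+0+(r'+1)+1) (n'+1) 0 0 (r'+1) (n'+1)
            (n'*(n'+1)/2 + (n'+1)) (n'+1) (n'+r'+1+1)
            (by omega) (by omega) (by have := tri n'; omega) (by omega) (by omega),
          tt_eq q a b c d (n'+1+0+(r'+1)) (n'+1) 0 0 r' (n'+1)
            (n'*(n'+1)/2 + (n'+1)) (n'+1) (n'+r'+1)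
            (by omega) (by omega) (by have := tri n'; omega) (by omega) (by omega),
          tt_eq q a b c d (n'+1+0+(r'+1)) n' 0 0 (r'+1) n'
            (n'*(n'+1)/2) n' (n'+r'+1)
            (by omega) (by omega) (by omega) (by omega) (by omega),
          pascal2 hq (n'+r'+1) n',
          show n'+r'+1-n' = r'+1 from by omega,
          qbinom_zero hq (n'+1), qbinom_zero hq n']
        ring
      · -- j = j'+1, r = 0
        rw [if_neg (Nat.succ_ne_zero j')]
        simp only [Nat.add_sub_cancel]
        rw [tt_eq q a b c d (n'+1+(j'+1)+0+1) (n'+1) (j'+1) 0 0 (n'+1)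
            (n'*(n'+1)/2 + (n'+1)) (n'+j'+1+1) (n'+1)
            (by omega) (by omega) (by have := tri n'; omega) (by omega) (by omega),
          tt_eq q a b c d (n'+1+(j'+1)+0) (n'+1) (j'+1) 0 0 (n'+1)
            (n'*(n'+1)/2 + (n'+1)) (n'+j'+1+1) n'
            (by omega) (by omega) (by have := tri n'; omega) (by omega) (by omega),
          tt_eq q a b c d (n'+1+(j'+1)+0) (n'+1) j' 0 0 (n'+1)
            (n'*(n'+1)/2 + (n'+1)) (n'+j'+1) (n'+1)
            (by omega) (by omega) (by have := tri n'; omega) (by omega) (by omega),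
          tt_eq q a b c d (n'+1+(j'+1)+0-1) (n'+1) j' 0 0 (n'+1)
            (n'*(n'+1)/2 + (n'+1)) (n'+j'+1) n'
            (by omega) (by omega) (by have := tri n'; omega) (by omega) (by omega),
          tt_eq q a b c d (n'+1+(j'+1)+0) n' (j'+1) 0 0 n'
            (n'*(n'+1)/2) (n'+j'+1) n'
            (by omega) (by omega) (by omega) (by omega) (by omega),
          pascal1 hq (n'+j'+1) j',
          qbinom_self hq (n'+1), qbinom_self hq n',
          qbinom_of_lt q (show n' < n'+1 from by omega),
          qbinom_zero hq (n'+1), qbinom_zero hq n']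
        ring
      · -- j = j'+1, r = r'+1
        rw [if_neg (Nat.succ_ne_zero j')]
        simp only [Nat.add_sub_cancel]
        rw [tt_eq q a b c d (n'+1+(j'+1)+(r'+1)+1) (n'+1) (j'+1) 0 (r'+1) (n'+1)
            (n'*(n'+1)/2 + (n'+1)) (n'+j'+1+1) (n'+r'+1+1)
            (by omega) (by omega) (by have := tri n'; omega) (by omega) (by omega),
          tt_eq q a b c d (n'+1+(j'+1)+(r'+1)) (n'+1) (j'+1) 0 r' (n'+1)
            (n'*(n'+1)/2 + (n'+1)) (n'+j'+1+1) (n'+r'+1)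
            (by omega) (by omega) (by have := tri n'; omega) (by omega) (by omega),
          tt_eq q a b c d (n'+1+(j'+1)+(r'+1)) (n'+1) j' 0 (r'+1) (n'+1)
            (n'*(n'+1)/2 + (n'+1)) (n'+j'+1) (n'+r'+1+1)
            (by omega) (by omega) (by have := tri n'; omega) (by omega) (by omega),
          tt_eq q a b c d (n'+1+(j'+1)+(r'+1)-1) (n'+1) j' 0 r' (n'+1)
            (n'*(n'+1)/2 + (n'+1)) (n'+j'+1) (n'+r'+1)
            (by omega) (by omega) (by have := tri n'; omega) (by omega) (by omega),
          tt_eq q a b c d (n'+1+(j'+1)+(r'+1)) n' (j'+1) 0 (r'+1) n'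
            (n'*(n'+1)/2) (n'+j'+1) (n'+r'+1)
            (by omega) (by omega) (by omega) (by omega) (by omega),
          pascal1 hq (n'+j'+1) j', pascal2 hq (n'+r'+1) n',
          show n'+r'+1-n' = r'+1 from by omega,
          qbinom_zero hq (n'+1), qbinom_zero hq n']
        ring
    · -- l = l'+1
      rw [if_neg (show ¬(n'+1 = 0 ∨ l'+1 = 0) from by omega)]
      by_cases hl : l' + 1 ≤ n' + 1
      · obtain ⟨s, rfl⟩ : ∃ s, n' = l' + s := ⟨n' - l', by omega⟩
        obtain ⟨r, rfl⟩ : ∃ r, N = l'+s+1+j+(l'+1)+r := ⟨N - (l'+s+1+j+(l'+1)), by omega⟩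
        rcases j with _ | j' <;> rcases r with _ | r' <;> rcases s with _ | s''
        · -- j=0, r=0, s=0
          rw [if_pos rfl]
          simp only [Nat.add_sub_cancel]
          rw [tt_eq q a b c d (l'+0+1+0+(l'+1)+0+1) (l'+0+1) (0) (l'+1) (0) (0) ((l'+0)*(l'+0+1)/2 + (l'+0+1) + (l'*(l'+1)/2 + (l'+1))) (l'+0+1) (l'+0+1) (by omega) (by omega) (by have := tri (l'+0); have := tri l'; omega) (by omega) (by omega),
            tt_eq q a b c d (l'+0+1+0+(l'+1)+0) (l'+0+1) (0) (l'+1) (0) (0) ((l'+0)*(l'+0+1)/2 + (l'+0+1) + (l'*(l'+1)/2 + (l'+1))) (l'+0+1) (l'+0) (by omega) (by omega) (by have := tri (l'+0); have := tri l'; omega) (by omega) (by omega),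
            tt_eq q a b c d (l'+0+1+0+(l'+1)+0) (l'+0) (0) (l'+1) (0) (0) ((l'+0)*(l'+0+1)/2 + (l'*(l'+1)/2 + (l'+1))) (l'+0) (l'+0) (by omega) (by omega) (by have := tri l'; omega) (by omega) (by omega),
            tt_eq q a b c d (l'+0+1+0+(l'+1)+0-1) (l'+0) (0) l' (0) (0) ((l'+0)*(l'+0+1)/2 + l'*(l'+1)/2) (l'+0) (l'+0) (by omega) (by omega) (by omega) (by omega) (by omega),
            qbinom_self hq (l'+0+1),
            qbinom_of_lt q (show (l'+0) < l'+0+1 from by omega),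
            qbinom_self hq (l'+0),
            show qbinom q (l'+0) l' = 1 from qbinom_self hq l',
            qbinom_zero hq (l'+0+1),
            qbinom_zero hq (l'+0)]
          ring
        · -- j=0, r=0, s=s''+1
          rw [if_pos rfl]
          simp only [Nat.add_sub_cancel]
          rw [tt_eq q a b c d (l'+(s''+1)+1+0+(l'+1)+0+1) (l'+(s''+1)+1) (0) (l'+1) (0) (s''+1) ((l'+(s''+1))*(l'+(s''+1)+1)/2 + (l'+(s''+1)+1) + (l'*(l'+1)/2 + (l'+1))) (l'+(s''+1)+1) (l'+(s''+1)+1) (by omega) (by omega) (by have := tri (l'+(s''+1)); have := tri l'; omega) (by omega) (by omega),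
            tt_eq q a b c d (l'+(s''+1)+1+0+(l'+1)+0) (l'+(s''+1)+1) (0) (l'+1) (0) (s''+1) ((l'+(s''+1))*(l'+(s''+1)+1)/2 + (l'+(s''+1)+1) + (l'*(l'+1)/2 + (l'+1))) (l'+(s''+1)+1) (l'+(s''+1)) (by omega) (by omega) (by have := tri (l'+(s''+1)); have := tri l'; omega) (by omega) (by omega),
            tt_eq q a b c d (l'+(s''+1)+1+0+(l'+1)+0) (l'+(s''+1)) (0) (l'+1) (0) (s'') ((l'+(s''+1))*(l'+(s''+1)+1)/2 + (l'*(l'+1)/2 + (l'+1))) (l'+(s''+1)) (l'+(s''+1)) (by omega) (by omega) (by have := tri l'; omega) (by omega) (by omega),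
            tt_eq q a b c d (l'+(s''+1)+1+0+(l'+1)+0-1) (l'+(s''+1)) (0) l' (0) (s''+1) ((l'+(s''+1))*(l'+(s''+1)+1)/2 + l'*(l'+1)/2) (l'+(s''+1)) (l'+(s''+1)) (by omega) (by omega) (by omega) (by omega) (by omega),
            qbinom_self hq (l'+(s''+1)+1),
            qbinom_of_lt q (show (l'+(s''+1)) < l'+(s''+1)+1 from by omega),
            qbinom_self hq (l'+(s''+1)),
            pascal1 hq (l'+(s''+1)) l',
            qbinom_zero hq (l'+(s''+1)+1),
            qbinom_zero hq (l'+(s''+1))]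
          ring
        · -- j=0, r=(r'+1), s=0
          rw [if_pos rfl]
          simp only [Nat.add_sub_cancel]
          rw [tt_eq q a b c d (l'+0+1+0+(l'+1)+(r'+1)+1) (l'+0+1) (0) (l'+1) ((r'+1)) (0) ((l'+0)*(l'+0+1)/2 + (l'+0+1) + (l'*(l'+1)/2 + (l'+1))) (l'+0+1) (l'+0+1+r'+1) (by omega) (by omega) (by have := tri (l'+0); have := tri l'; omega) (by omega) (by omega),
            tt_eq q a b c d (l'+0+1+0+(l'+1)+(r'+1)) (l'+0+1) (0) (l'+1) (r') (0) ((l'+0)*(l'+0+1)/2 + (l'+0+1) + (l'*(l'+1)/2 + (l'+1))) (l'+0+1) (l'+0+1+r') (by omega) (by omega) (by have := tri (l'+0); have := tri l'; omega) (by omega) (by omega),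
            tt_eq q a b c d (l'+0+1+0+(l'+1)+(r'+1)) (l'+0) (0) (l'+1) ((r'+1)) (0) ((l'+0)*(l'+0+1)/2 + (l'*(l'+1)/2 + (l'+1))) (l'+0) (l'+0+1+r') (by omega) (by omega) (by have := tri l'; omega) (by omega) (by omega),
            tt_eq q a b c d (l'+0+1+0+(l'+1)+(r'+1)-1) (l'+0) (0) l' ((r'+1)) (0) ((l'+0)*(l'+0+1)/2 + l'*(l'+1)/2) (l'+0) (l'+0+1+r') (by omega) (by omega) (by omega) (by omega) (by omega),
            pascal2 hq (l'+0+1+r') (l'+0),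
            show l'+0+1+r'-(l'+0) = r'+1 from by omega,
            pascal1 hq (l'+0) l',
            qbinom_of_lt q (show l'+0 < l'+1 from by omega),
            qbinom_zero hq (l'+0+1),
            qbinom_zero hq (l'+0)]
          ring
        · -- j=0, r=(r'+1), s=s''+1
          rw [if_pos rfl]
          simp only [Nat.add_sub_cancel]
          rw [tt_eq q a b c d (l'+(s''+1)+1+0+(l'+1)+(r'+1)+1) (l'+(s''+1)+1) (0) (l'+1) ((r'+1)) (s''+1) ((l'+(s''+1))*(l'+(s''+1)+1)/2 + (l'+(s''+1)+1) + (l'*(l'+1)/2 + (l'+1))) (l'+(s''+1)+1) (l'+(s''+1)+1+r'+1) (by omega) (by omega) (by have := tri (l'+(s''+1)); have := tri l'; omega) (by omega) (by omega),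
            tt_eq q a b c d (l'+(s''+1)+1+0+(l'+1)+(r'+1)) (l'+(s''+1)+1) (0) (l'+1) (r') (s''+1) ((l'+(s''+1))*(l'+(s''+1)+1)/2 + (l'+(s''+1)+1) + (l'*(l'+1)/2 + (l'+1))) (l'+(s''+1)+1) (l'+(s''+1)+1+r') (by omega) (by omega) (by have := tri (l'+(s''+1)); have := tri l'; omega) (by omega) (by omega),
            tt_eq q a b c d (l'+(s''+1)+1+0+(l'+1)+(r'+1)) (l'+(s''+1)) (0) (l'+1) ((r'+1)) (s'') ((l'+(s''+1))*(l'+(s''+1)+1)/2 + (l'*(l'+1)/2 + (l'+1))) (l'+(s''+1)) (l'+(s''+1)+1+r') (by omega) (by omega) (by have := tri l'; omega) (by omega) (by omega),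
            tt_eq q a b c d (l'+(s''+1)+1+0+(l'+1)+(r'+1)-1) (l'+(s''+1)) (0) l' ((r'+1)) (s''+1) ((l'+(s''+1))*(l'+(s''+1)+1)/2 + l'*(l'+1)/2) (l'+(s''+1)) (l'+(s''+1)+1+r') (by omega) (by omega) (by omega) (by omega) (by omega),
            pascal2 hq (l'+(s''+1)+1+r') (l'+(s''+1)),
            show l'+(s''+1)+1+r'-(l'+(s''+1)) = r'+1 from by omega,
            pascal1 hq (l'+(s''+1)) l',
            qbinom_zero hq (l'+(s''+1)+1),
            qbinom_zero hq (l'+(s''+1))]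
          ring
        · -- j=(j'+1), r=0, s=0
          rw [if_neg (Nat.succ_ne_zero j')]
          simp only [Nat.add_sub_cancel]
          rw [tt_eq q a b c d (l'+0+1+(j'+1)+(l'+1)+0+1) (l'+0+1) (j'+1) (l'+1) (0) (0) ((l'+0)*(l'+0+1)/2 + (l'+0+1) + (l'*(l'+1)/2 + (l'+1))) (l'+0+1+j'+1) (l'+0+1) (by omega) (by omega) (by have := tri (l'+0); have := tri l'; omega) (by omega) (by omega),
            tt_eq q a b c d (l'+0+1+(j'+1)+(l'+1)+0) (l'+0+1) (j'+1) (l'+1) (0) (0) ((l'+0)*(l'+0+1)/2 + (l'+0+1) + (l'*(l'+1)/2 + (l'+1))) (l'+0+1+j'+1) (l'+0) (by omega) (by omega) (by have := tri (l'+0); have := tri l'; omega) (by omega) (by omega),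
            tt_eq q a b c d (l'+0+1+(j'+1)+(l'+1)+0) (l'+0+1) j' (l'+1) (0) (0) ((l'+0)*(l'+0+1)/2 + (l'+0+1) + (l'*(l'+1)/2 + (l'+1))) (l'+0+1+j') (l'+0+1) (by omega) (by omega) (by have := tri (l'+0); have := tri l'; omega) (by omega) (by omega),
            tt_eq q a b c d (l'+0+1+(j'+1)+(l'+1)+0-1) (l'+0+1) j' (l'+1) (0) (0) ((l'+0)*(l'+0+1)/2 + (l'+0+1) + (l'*(l'+1)/2 + (l'+1))) (l'+0+1+j') (l'+0) (by omega) (by omega) (by have := tri (l'+0); have := tri l'; omega) (by omega) (by omega),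
            tt_eq q a b c d (l'+0+1+(j'+1)+(l'+1)+0) (l'+0) (j'+1) (l'+1) (0) (0) ((l'+0)*(l'+0+1)/2 + (l'*(l'+1)/2 + (l'+1))) (l'+0+1+j') (l'+0) (by omega) (by omega) (by have := tri l'; omega) (by omega) (by omega),
            tt_eq q a b c d (l'+0+1+(j'+1)+(l'+1)+0-1) (l'+0) (j'+1) l' (0) (0) ((l'+0)*(l'+0+1)/2 + l'*(l'+1)/2) (l'+0+1+j') (l'+0) (by omega) (by omega) (by omega) (by omega) (by omega),
            pascal1 hq (l'+0+1+j') j',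
            qbinom_self hq (l'+0+1),
            qbinom_of_lt q (show (l'+0) < l'+0+1 from by omega),
            qbinom_self hq (l'+0),
            show qbinom q (l'+0) l' = 1 from qbinom_self hq l']
          ring
        · -- j=(j'+1), r=0, s=s''+1
          rw [if_neg (Nat.succ_ne_zero j')]
          simp only [Nat.add_sub_cancel]
          rw [tt_eq q a b c d (l'+(s''+1)+1+(j'+1)+(l'+1)+0+1) (l'+(s''+1)+1) (j'+1) (l'+1) (0) (s''+1) ((l'+(s''+1))*(l'+(s''+1)+1)/2 + (l'+(s''+1)+1) + (l'*(l'+1)/2 + (l'+1))) (l'+(s''+1)+1+j'+1) (l'+(s''+1)+1) (by omega) (by omega) (by have := tri (l'+(s''+1)); have := tri l'; omega) (by omega) (by omega),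
            tt_eq q a b c d (l'+(s''+1)+1+(j'+1)+(l'+1)+0) (l'+(s''+1)+1) (j'+1) (l'+1) (0) (s''+1) ((l'+(s''+1))*(l'+(s''+1)+1)/2 + (l'+(s''+1)+1) + (l'*(l'+1)/2 + (l'+1))) (l'+(s''+1)+1+j'+1) (l'+(s''+1)) (by omega) (by omega) (by have := tri (l'+(s''+1)); have := tri l'; omega) (by omega) (by omega),
            tt_eq q a b c d (l'+(s''+1)+1+(j'+1)+(l'+1)+0) (l'+(s''+1)+1) j' (l'+1) (0) (s''+1) ((l'+(s''+1))*(l'+(s''+1)+1)/2 + (l'+(s''+1)+1) + (l'*(l'+1)/2 + (l'+1))) (l'+(s''+1)+1+j') (l'+(s''+1)+1) (by omega) (by omega) (by have := tri (l'+(s''+1)); have := tri l'; omega) (by omega) (by omega),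
            tt_eq q a b c d (l'+(s''+1)+1+(j'+1)+(l'+1)+0-1) (l'+(s''+1)+1) j' (l'+1) (0) (s''+1) ((l'+(s''+1))*(l'+(s''+1)+1)/2 + (l'+(s''+1)+1) + (l'*(l'+1)/2 + (l'+1))) (l'+(s''+1)+1+j') (l'+(s''+1)) (by omega) (by omega) (by have := tri (l'+(s''+1)); have := tri l'; omega) (by omega) (by omega),
            tt_eq q a b c d (l'+(s''+1)+1+(j'+1)+(l'+1)+0) (l'+(s''+1)) (j'+1) (l'+1) (0) (s'') ((l'+(s''+1))*(l'+(s''+1)+1)/2 + (l'*(l'+1)/2 + (l'+1))) (l'+(s''+1)+1+j') (l'+(s''+1)) (by omega) (by omega) (by have := tri l'; omega) (by omega) (by omega),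
            tt_eq q a b c d (l'+(s''+1)+1+(j'+1)+(l'+1)+0-1) (l'+(s''+1)) (j'+1) l' (0) (s''+1) ((l'+(s''+1))*(l'+(s''+1)+1)/2 + l'*(l'+1)/2) (l'+(s''+1)+1+j') (l'+(s''+1)) (by omega) (by omega) (by omega) (by omega) (by omega),
            pascal1 hq (l'+(s''+1)+1+j') j',
            qbinom_self hq (l'+(s''+1)+1),
            qbinom_of_lt q (show (l'+(s''+1)) < l'+(s''+1)+1 from by omega),
            qbinom_self hq (l'+(s''+1)),
            pascal1 hq (l'+(s''+1)) l']
          ring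
        · -- j=(j'+1), r=(r'+1), s=0
          rw [if_neg (Nat.succ_ne_zero j')]
          simp only [Nat.add_sub_cancel]
          rw [tt_eq q a b c d (l'+0+1+(j'+1)+(l'+1)+(r'+1)+1) (l'+0+1) (j'+1) (l'+1) ((r'+1)) (0) ((l'+0)*(l'+0+1)/2 + (l'+0+1) + (l'*(l'+1)/2 + (l'+1))) (l'+0+1+j'+1) (l'+0+1+r'+1) (by omega) (by omega) (by have := tri (l'+0); have := tri l'; omega) (by omega) (by omega),
            tt_eq q a b c d (l'+0+1+(j'+1)+(l'+1)+(r'+1)) (l'+0+1) (j'+1) (l'+1) (r') (0) ((l'+0)*(l'+0+1)/2 + (l'+0+1) + (l'*(l'+1)/2 + (l'+1))) (l'+0+1+j'+1) (l'+0+1+r') (by omega) (by omega) (by have := tri (l'+0); have := tri l'; omega) (by omega) (by omega),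
            tt_eq q a b c d (l'+0+1+(j'+1)+(l'+1)+(r'+1)) (l'+0+1) j' (l'+1) ((r'+1)) (0) ((l'+0)*(l'+0+1)/2 + (l'+0+1) + (l'*(l'+1)/2 + (l'+1))) (l'+0+1+j') (l'+0+1+r'+1) (by omega) (by omega) (by have := tri (l'+0); have := tri l'; omega) (by omega) (by omega),
            tt_eq q a b c d (l'+0+1+(j'+1)+(l'+1)+(r'+1)-1) (l'+0+1) j' (l'+1) (r') (0) ((l'+0)*(l'+0+1)/2 + (l'+0+1) + (l'*(l'+1)/2 + (l'+1))) (l'+0+1+j') (l'+0+1+r') (by omega) (by omega) (by have := tri (l'+0); have := tri l'; omega) (by omega) (by omega),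
            tt_eq q a b c d (l'+0+1+(j'+1)+(l'+1)+(r'+1)) (l'+0) (j'+1) (l'+1) ((r'+1)) (0) ((l'+0)*(l'+0+1)/2 + (l'*(l'+1)/2 + (l'+1))) (l'+0+1+j') (l'+0+1+r') (by omega) (by omega) (by have := tri l'; omega) (by omega) (by omega),
            tt_eq q a b c d (l'+0+1+(j'+1)+(l'+1)+(r'+1)-1) (l'+0) (j'+1) l' ((r'+1)) (0) ((l'+0)*(l'+0+1)/2 + l'*(l'+1)/2) (l'+0+1+j') (l'+0+1+r') (by omega) (by omega) (by omega) (by omega) (by omega),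
            pascal1 hq (l'+0+1+j') j',
            pascal2 hq (l'+0+1+r') (l'+0),
            show l'+0+1+r'-(l'+0) = r'+1 from by omega,
            pascal1 hq (l'+0) l',
            qbinom_of_lt q (show l'+0 < l'+1 from by omega)]
          ring
        · -- j=(j'+1), r=(r'+1), s=s''+1
          rw [if_neg (Nat.succ_ne_zero j')]
          simp only [Nat.add_sub_cancel]
          rw [tt_eq q a b c d (l'+(s''+1)+1+(j'+1)+(l'+1)+(r'+1)+1) (l'+(s''+1)+1) (j'+1) (l'+1) ((r'+1)) (s''+1) ((l'+(s''+1))*(l'+(s''+1)+1)/2 + (l'+(s''+1)+1) + (l'*(l'+1)/2 + (l'+1))) (l'+(s''+1)+1+j'+1) (l'+(s''+1)+1+r'+1) (by omega) (by omega) (by have := tri (l'+(s''+1)); have := tri l'; omega) (by omega) (by omega),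
            tt_eq q a b c d (l'+(s''+1)+1+(j'+1)+(l'+1)+(r'+1)) (l'+(s''+1)+1) (j'+1) (l'+1) (r') (s''+1) ((l'+(s''+1))*(l'+(s''+1)+1)/2 + (l'+(s''+1)+1) + (l'*(l'+1)/2 + (l'+1))) (l'+(s''+1)+1+j'+1) (l'+(s''+1)+1+r') (by omega) (by omega) (by have := tri (l'+(s''+1)); have := tri l'; omega) (by omega) (by omega),
            tt_eq q a b c d (l'+(s''+1)+1+(j'+1)+(l'+1)+(r'+1)) (l'+(s''+1)+1) j' (l'+1) ((r'+1)) (s''+1) ((l'+(s''+1))*(l'+(s''+1)+1)/2 + (l'+(s''+1)+1) + (l'*(l'+1)/2 + (l'+1))) (l'+(s''+1)+1+j') (l'+(s''+1)+1+r'+1) (by omega) (by omega) (by have := tri (l'+(s''+1)); have := tri l'; omega) (by omega) (by omega),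
            tt_eq q a b c d (l'+(s''+1)+1+(j'+1)+(l'+1)+(r'+1)-1) (l'+(s''+1)+1) j' (l'+1) (r') (s''+1) ((l'+(s''+1))*(l'+(s''+1)+1)/2 + (l'+(s''+1)+1) + (l'*(l'+1)/2 + (l'+1))) (l'+(s''+1)+1+j') (l'+(s''+1)+1+r') (by omega) (by omega) (by have := tri (l'+(s''+1)); have := tri l'; omega) (by omega) (by omega),
            tt_eq q a b c d (l'+(s''+1)+1+(j'+1)+(l'+1)+(r'+1)) (l'+(s''+1)) (j'+1) (l'+1) ((r'+1)) (s'') ((l'+(s''+1))*(l'+(s''+1)+1)/2 + (l'*(l'+1)/2 + (l'+1))) (l'+(s''+1)+1+j') (l'+(s''+1)+1+r') (by omega) (by omega) (by have := tri l'; omega) (by omega) (by omega),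
            tt_eq q a b c d (l'+(s''+1)+1+(j'+1)+(l'+1)+(r'+1)-1) (l'+(s''+1)) (j'+1) l' ((r'+1)) (s''+1) ((l'+(s''+1))*(l'+(s''+1)+1)/2 + l'*(l'+1)/2) (l'+(s''+1)+1+j') (l'+(s''+1)+1+r') (by omega) (by omega) (by omega) (by omega) (by omega),
            pascal1 hq (l'+(s''+1)+1+j') j',
            pascal2 hq (l'+(s''+1)+1+r') (l'+(s''+1)),
            show l'+(s''+1)+1+r'-(l'+(s''+1)) = r'+1 from by omega,
            pascal1 hq (l'+(s''+1)) l']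
          ring
      · -- l > n : everything vanishes
        have z1 : ∀ M jj, tt q a b c d M (n'+1) jj (l'+1) = 0 := fun M jj => by
          rw [tt, qbinom_of_lt q (show n'+1 < l'+1 from by omega)]; ring
        have z2 : ∀ M jj, tt q a b c d M n' jj (l'+1) = 0 := fun M jj => by
          rw [tt, qbinom_of_lt q (show n' < l'+1 from by omega)]; ring
        have z3 : ∀ M jj, tt q a b c d M n' jj l' = 0 := fun M jj => by
          rw [tt, qbinom_of_lt q (show n' < l' from by omega)]; ring
        rcases j with _ | j' <;> simp [z1, z2, z3]



def Dset (K m : ℕ) : Finset (ℕ × ℕ × ℕ) :=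
  (range K ×ˢ range K ×ˢ range K).filter (fun p => p.1 + p.2.1 + p.2.2 ≤ m)

lemma mem_Dset {K m : ℕ} {p : ℕ × ℕ × ℕ} :
    p ∈ Dset K m ↔ p.1 < K ∧ p.2.1 < K ∧ p.2.2 < K ∧ p.1 + p.2.1 + p.2.2 ≤ m := by
  simp [Dset, Finset.mem_filter, Finset.mem_product, Finset.mem_range, and_assoc]

lemma nested_eq (K m : ℕ) (h : m < K) (f : ℕ → ℕ → ℕ → ℂ) :
    (∑ n ∈ range (m+1), ∑ j ∈ range (m+1-n), ∑ l ∈ range (m+1-n-j), f n j l)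
      = ∑ p ∈ Dset K m, f p.1 p.2.1 p.2.2 := by
  set g : ℕ → ℕ → ℕ → ℂ := fun n j l => if n + j + l ≤ m then f n j l else 0 with hg
  have claim1 : ∀ n j, n + j ≤ m →
      (∑ l ∈ range (m+1-n-j), f n j l) = ∑ l ∈ range K, g n j l := by
    intro n j hnj
    have hsub : range (m+1-n-j) ⊆ range K := Finset.range_subset_range.2 (by omega)
    have hzero : ∀ l ∈ range K, l ∉ range (m+1-n-j) → g n j l = 0 := by
      intro l _ hl
      rw [Finset.mem_range] at hl
      simp only [hg]
      rw [if_neg (by omega)]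
    rw [← Finset.sum_subset hsub hzero]
    refine Finset.sum_congr rfl fun l hl => ?_
    rw [Finset.mem_range] at hl
    simp only [hg]
    rw [if_pos (by omega)]
  have claim2 : ∀ n, n ≤ m →
      (∑ j ∈ range (m+1-n), ∑ l ∈ range (m+1-n-j), f n j l)
        = ∑ j ∈ range K, ∑ l ∈ range K, g n j l := by
    intro n hn
    have hsub : range (m+1-n) ⊆ range K := Finset.range_subset_range.2 (by omega)
    have hzero : ∀ j ∈ range K, j ∉ range (m+1-n) → (∑ l ∈ range K, g n j l) = 0 := by
      intro j _ hj
      rw [Finset.mem_range] at hj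
      refine Finset.sum_eq_zero fun l _ => ?_
      simp only [hg]
      rw [if_neg (by omega)]
    rw [← Finset.sum_subset hsub hzero]
    refine Finset.sum_congr rfl fun j hj => ?_
    rw [Finset.mem_range] at hj
    exact claim1 n j (by omega)
  have claim3 : (∑ n ∈ range (m+1), ∑ j ∈ range (m+1-n), ∑ l ∈ range (m+1-n-j), f n j l)
      = ∑ n ∈ range K, ∑ j ∈ range K, ∑ l ∈ range K, g n j l := by
    have hsub : range (m+1) ⊆ range K := Finset.range_subset_range.2 (by omega)
    have hzero : ∀ n ∈ range K, n ∉ range (m+1) →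
        (∑ j ∈ range K, ∑ l ∈ range K, g n j l) = 0 := by
      intro n _ hn
      rw [Finset.mem_range] at hn
      refine Finset.sum_eq_zero fun j _ => Finset.sum_eq_zero fun l _ => ?_
      simp only [hg]
      rw [if_neg (by omega)]
    rw [← Finset.sum_subset hsub hzero]
    refine Finset.sum_congr rfl fun n hn => ?_
    rw [Finset.mem_range] at hn
    exact claim2 n (by omega)
  rw [claim3, Dset, Finset.sum_filter, Finset.sum_product]
  exact Finset.sum_congr rfl fun n _ => by rw [Finset.sum_product]

lemma shift_j (K m : ℕ) (hm : 1 ≤ m) (hK : m < K) (f : ℕ → ℕ → ℕ → ℂ) :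
    (∑ p ∈ Dset K m, if p.2.1 = 0 then 0 else f p.1 (p.2.1 - 1) p.2.2)
      = ∑ p ∈ Dset K (m-1), f p.1 p.2.1 p.2.2 := by
  have h1 : (∑ p ∈ Dset K m, if p.2.1 = 0 then 0 else f p.1 (p.2.1 - 1) p.2.2)
      = ∑ p ∈ (Dset K m).filter (fun p => ¬ p.2.1 = 0), f p.1 (p.2.1 - 1) p.2.2 := by
    rw [Finset.sum_filter]
    exact Finset.sum_congr rfl fun p _ => by by_cases h : p.2.1 = 0 <;> simp [h]
  rw [h1]
  apply Finset.sum_nbij' (i := fun p => (p.1, p.2.1 - 1, p.2.2))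
    (j := fun p => (p.1, p.2.1 + 1, p.2.2))
  · rintro ⟨x, y, z⟩ hp
    simp only [Finset.mem_filter, mem_Dset] at hp
    rw [mem_Dset]
    dsimp only
    omega
  · rintro ⟨x, y, z⟩ hp
    rw [mem_Dset] at hp
    simp only [Finset.mem_filter, mem_Dset]
    dsimp only at hp ⊢
    omega
  · rintro ⟨x, y, z⟩ hp
    simp only [Finset.mem_filter, mem_Dset] at hp
    dsimp only at hp ⊢
    rw [Prod.mk.injEq, Prod.mk.injEq]
    omega
  · rintro ⟨x, y, z⟩ hp; rfl
  · rintro ⟨x, y, z⟩ hp; rfl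

lemma shift_n (K m : ℕ) (hm : 1 ≤ m) (hK : m < K) (f : ℕ → ℕ → ℕ → ℂ) :
    (∑ p ∈ Dset K m, if p.1 = 0 then 0 else f (p.1 - 1) p.2.1 p.2.2)
      = ∑ p ∈ Dset K (m-1), f p.1 p.2.1 p.2.2 := by
  have h1 : (∑ p ∈ Dset K m, if p.1 = 0 then 0 else f (p.1 - 1) p.2.1 p.2.2)
      = ∑ p ∈ (Dset K m).filter (fun p => ¬ p.1 = 0), f (p.1 - 1) p.2.1 p.2.2 := by
    rw [Finset.sum_filter]
    exact Finset.sum_congr rfl fun p _ => by by_cases h : p.1 = 0 <;> simp [h]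
  rw [h1]
  apply Finset.sum_nbij' (i := fun p => (p.1 - 1, p.2.1, p.2.2))
    (j := fun p => (p.1 + 1, p.2.1, p.2.2))
  · rintro ⟨x, y, z⟩ hp
    simp only [Finset.mem_filter, mem_Dset] at hp
    rw [mem_Dset]
    dsimp only
    omega
  · rintro ⟨x, y, z⟩ hp
    rw [mem_Dset] at hp
    simp only [Finset.mem_filter, mem_Dset]
    dsimp only at hp ⊢
    omega
  · rintro ⟨x, y, z⟩ hp
    simp only [Finset.mem_filter, mem_Dset] at hp
    dsimp only at hp ⊢
    rw [Prod.mk.injEq, Prod.mk.injEq]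
    omega
  · rintro ⟨x, y, z⟩ hp; rfl
  · rintro ⟨x, y, z⟩ hp; rfl

lemma shift_nl (K m : ℕ) (hm : 2 ≤ m) (hK : m < K) (f : ℕ → ℕ → ℕ → ℂ) :
    (∑ p ∈ Dset K m, if p.1 = 0 ∨ p.2.2 = 0 then 0 else f (p.1 - 1) p.2.1 (p.2.2 - 1))
      = ∑ p ∈ Dset K (m-2), f p.1 p.2.1 p.2.2 := by
  have h1 : (∑ p ∈ Dset K m, if p.1 = 0 ∨ p.2.2 = 0 then 0
        else f (p.1 - 1) p.2.1 (p.2.2 - 1))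
      = ∑ p ∈ (Dset K m).filter (fun p => ¬ (p.1 = 0 ∨ p.2.2 = 0)),
          f (p.1 - 1) p.2.1 (p.2.2 - 1) := by
    rw [Finset.sum_filter]
    exact Finset.sum_congr rfl fun p _ => by
      by_cases h : p.1 = 0 ∨ p.2.2 = 0 <;> simp [h]
  rw [h1]
  apply Finset.sum_nbij' (i := fun p => (p.1 - 1, p.2.1, p.2.2 - 1))
    (j := fun p => (p.1 + 1, p.2.1, p.2.2 + 1))
  · rintro ⟨x, y, z⟩ hp
    simp only [Finset.mem_filter, mem_Dset, not_or] at hp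
    rw [mem_Dset]
    dsimp only
    omega
  · rintro ⟨x, y, z⟩ hp
    rw [mem_Dset] at hp
    simp only [Finset.mem_filter, mem_Dset, not_or]
    dsimp only at hp ⊢
    omega
  · rintro ⟨x, y, z⟩ hp
    simp only [Finset.mem_filter, mem_Dset, not_or] at hp
    dsimp only at hp ⊢
    rw [Prod.mk.injEq, Prod.mk.injEq]
    omega
  · rintro ⟨x, y, z⟩ hp; rfl
  · rintro ⟨x, y, z⟩ hp; rfl

lemma layer {q : ℂ} (hq : ‖q‖ < 1) (a b c d : ℂ) (K M : ℕ) (hM : 1 ≤ M) (hK : M < K) :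
    ∑ p ∈ Dset K M, tt q a b c d M p.1 p.2.1 p.2.2
      = (∑ p ∈ Dset K (M-1), tt q a b c d M p.1 p.2.1 p.2.2) + a ^ M := by
  have hsub : Dset K (M-1) ⊆ Dset K M := fun p hp => by
    rw [mem_Dset] at *; omega
  rw [← Finset.sum_sdiff hsub]
  have hone : ∑ p ∈ Dset K M \ Dset K (M-1), tt q a b c d M p.1 p.2.1 p.2.2 = a ^ M := by
    rw [Finset.sum_eq_single_of_mem ((0:ℕ), M, (0:ℕ))]
    · rw [tt_n0 hq a b c d M M 0 (by omega)]; ring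
    · rw [Finset.mem_sdiff, mem_Dset, mem_Dset]
      constructor
      · dsimp only; omega
      · dsimp only; omega
    · rintro ⟨x, y, z⟩ hp hne
      rw [Finset.mem_sdiff, mem_Dset, mem_Dset] at hp
      dsimp only at hp ⊢
      rcases x with _ | x'
      · rcases z with _ | z'
        · exfalso
          apply hne
          have : y = M := by omega
          rw [this]
        · rw [tt, qbinom_of_lt q (Nat.succ_pos z')]; ring
      · rw [tt, qbinom_of_lt q (show M - 1 - y - z < x' + 1 from by omega)]; ring
  rw [hone]; ring

noncomputable def G (q a b c d : ℂ) (N : ℕ) : ℂ :=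
  ∑ n ∈ range N, ∑ j ∈ range (N - n), ∑ l ∈ range (N - n - j), tt q a b c d N n j l

lemma key {q : ℂ} (hq : ‖q‖ < 1) (a b c d : ℂ) (M : ℕ) :
    G q a b c d (M+3) = (a + b + d * q ^ (M+2)) * G q a b c d (M+2)
      + (-(a * b) + c * q ^ (M+2)) * G q a b c d (M+1) := by
  set K := M + 3 with hKdef
  -- express G (M+3) over Dset K (M+2)
  have e0 : G q a b c d (M+3) = ∑ p ∈ Dset K (M+2),
      tt q a b c d (M+3) p.1 p.2.1 p.2.2 := by
    have h := nested_eq K (M+2) (by omega) (fun n j l => tt q a b c d (M+3) n j l)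
    simp only [show M+2+1 = M+3 from rfl] at h
    exact h
  have eG2 : (∑ p ∈ Dset K (M+1), tt q a b c d (M+2) p.1 p.2.1 p.2.2)
      = G q a b c d (M+2) := by
    have h := nested_eq K (M+1) (by omega) (fun n j l => tt q a b c d (M+2) n j l)
    simp only [show M+1+1 = M+2 from rfl] at h
    exact h.symm
  have eG1 : (∑ p ∈ Dset K M, tt q a b c d (M+1) p.1 p.2.1 p.2.2)
      = G q a b c d (M+1) := by
    have h := nested_eq K M (by omega) (fun n j l => tt q a b c d (M+1) n j l)
    exact h.symm
  rw [e0]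
  have congr1 : ∑ p ∈ Dset K (M+2), tt q a b c d (M+3) p.1 p.2.1 p.2.2
      = ∑ p ∈ Dset K (M+2),
          (b * tt q a b c d (M+2) p.1 p.2.1 p.2.2
            + (if p.2.1 = 0 then 0 else (a * tt q a b c d (M+2) p.1 (p.2.1-1) p.2.2
                - a * b * tt q a b c d (M+1) p.1 (p.2.1-1) p.2.2))
            + (if p.1 = 0 then 0 else d * q^(M+2) * tt q a b c d (M+2) (p.1-1) p.2.1 p.2.2)
            + (if p.1 = 0 ∨ p.2.2 = 0 then 0
                else c * q^(M+2) * tt q a b c d (M+1) (p.1-1) p.2.1 (p.2.2-1))) := by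
    refine Finset.sum_congr rfl fun p hp => ?_
    rw [mem_Dset] at hp
    have h := perpoint hq a b c d (M+2) p.1 p.2.1 p.2.2 (by omega) (by omega)
    simp only [show M+2+1 = M+3 from rfl, show M+2-1 = M+1 from rfl] at h
    exact h
  rw [congr1]
  rw [Finset.sum_add_distrib, Finset.sum_add_distrib, Finset.sum_add_distrib]
  have S1 : ∑ p ∈ Dset K (M+2), b * tt q a b c d (M+2) p.1 p.2.1 p.2.2
      = b * (G q a b c d (M+2) + a^(M+2)) := by
    rw [← Finset.mul_sum]
    have h := layer hq a b c d K (M+2) (by omega) (by omega)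
    simp only [show M+2-1 = M+1 from rfl] at h
    rw [h, eG2]
  have S2 : ∑ p ∈ Dset K (M+2),
      (if p.2.1 = 0 then 0 else (a * tt q a b c d (M+2) p.1 (p.2.1-1) p.2.2
        - a * b * tt q a b c d (M+1) p.1 (p.2.1-1) p.2.2))
      = a * G q a b c d (M+2) - a * b * (G q a b c d (M+1) + a^(M+1)) := by
    have h := shift_j K (M+2) (by omega) (by omega)
      (fun n j l => a * tt q a b c d (M+2) n j l - a * b * tt q a b c d (M+1) n j l)
    simp only [show M+2-1 = M+1 from rfl] at h
    rw [h, Finset.sum_sub_distrib, ← Finset.mul_sum, ← Finset.mul_sum]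
    have hlay := layer hq a b c d K (M+1) (by omega) (by omega)
    simp only [show M+1-1 = M from rfl] at hlay
    rw [hlay, eG1]
    have h2 := nested_eq K (M+1) (by omega) (fun n j l => tt q a b c d (M+2) n j l)
    simp only [show M+1+1 = M+2 from rfl] at h2
    rw [← h2]
    have h3 := nested_eq K (M+1) (by omega) (fun n j l => tt q a b c d (M+2) n j l)
    simp only [show M+1+1 = M+2 from rfl] at h3
    rw [show (∑ n ∈ range (M+2), ∑ j ∈ range (M+2-n), ∑ l ∈ range (M+2-n-j),
      tt q a b c d (M+2) n j l) = G q a b c d (M+2) from rfl]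
  have S3 : ∑ p ∈ Dset K (M+2),
      (if p.1 = 0 then 0 else d * q^(M+2) * tt q a b c d (M+2) (p.1-1) p.2.1 p.2.2)
      = d * q^(M+2) * G q a b c d (M+2) := by
    have h := shift_n K (M+2) (by omega) (by omega)
      (fun n j l => d * q^(M+2) * tt q a b c d (M+2) n j l)
    simp only [show M+2-1 = M+1 from rfl] at h
    rw [h, ← Finset.mul_sum, eG2]
  have S4 : ∑ p ∈ Dset K (M+2),
      (if p.1 = 0 ∨ p.2.2 = 0 then 0
        else c * q^(M+2) * tt q a b c d (M+1) (p.1-1) p.2.1 (p.2.2-1))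
      = c * q^(M+2) * G q a b c d (M+1) := by
    have h := shift_nl K (M+2) (by omega) (by omega)
      (fun n j l => c * q^(M+2) * tt q a b c d (M+1) n j l)
    simp only [show M+2-2 = M from rfl] at h
    rw [h, ← Finset.mul_sum, eG1]
  rw [S1, S2, S3, S4]
  ring

theorem stmt11 (q a b c d : ℂ) (hq : ‖q‖ < 1) (A : ℕ → ℂ)
    (hA0 : A 0 = 0) (hA1 : A 1 = 1)
    (hArec : ∀ N : ℕ, 1 ≤ N →
      A (N + 1) = (a + b + d * q ^ N) * A N + (-(a * b) + c * q ^ N) * A (N - 1)) :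
    ∀ N : ℕ,
      A N = ∑ n ∈ range N, ∑ j ∈ range (N - n), ∑ l ∈ range (N - n - j),
        a ^ j * b ^ (N - 1 - n - j - l) * c ^ l * d ^ (n - l) *
          q ^ (n * (n + 1) / 2 + l * (l + 1) / 2) *
          qbinom q (n + j) j * qbinom q (N - 1 - j - l) n * qbinom q n l := by
  have main : ∀ N, A N = G q a b c d N := by
    intro N
    induction N using Nat.strong_induction_on with
    | _ N ih =>
      rcases N with _ | (_ | (_ | M))
      · show A 0 = G q a b c d 0
        rw [hA0]; simp [G]
      · show A 1 = G q a b c d 1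
        have h000 : tt q a b c d 1 0 0 0 = 1 := by
          rw [tt_n0 hq a b c d 1 0 0 (by norm_num)]; norm_num
        rw [hA1]
        simp [G, h000]
      · show A 2 = G q a b c d 2
        have h : A 2 = (a + b + d * q ^ 1) * 1 + (-(a * b) + c * q ^ 1) * 0 := by
          have h' := hArec 1 le_rfl
          rw [hA0, hA1] at h'
          exact h'
        have h000 : tt q a b c d 2 0 0 0 = b := by
          rw [tt_n0 hq a b c d 2 0 1 (by norm_num)]; ring
        have h010 : tt q a b c d 2 0 1 0 = a := by
          rw [tt_n0 hq a b c d 2 1 0 (by norm_num)]; ring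
        have h001 : tt q a b c d 2 0 0 1 = 0 := by
          rw [tt, qbinom_of_lt q Nat.one_pos]; ring
        have h100 : tt q a b c d 2 1 0 0 = d * q := by
          rw [tt_eq q a b c d 2 1 0 0 0 1 1 1 1 rfl rfl (by norm_num) rfl rfl,
            qbinom_self hq 1, qbinom_zero hq 1]
          ring
        rw [h]
        norm_num [G, Finset.sum_range_succ, h000, h010, h001, h100]
        ring
      · show A (M+3) = G q a b c d (M+3)
        have h := hArec (M+2) (by omega)
        simp only [show M+2+1 = M+3 from rfl, show M+2-1 = M+1 from rfl] at h
        rw [h, ih (M+2) (by omega), ih (M+1) (by omega), key hq a b c d M]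
  intro N
  rw [main N]
  rfl
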